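/- There exists a constant C > 0 such that for every integer n with n ≥ 2k/δ and every integer i ≥ k the following three bounds hold: (a) |g_{i,n}(s)| ≤ C (i/n − s)^α for all s ∈ [(i−k)/n, i/n]; (b) |g_{i,n}(s)| ≤ C n^{−k} ((i−k)/n − s)^{α−k} for all s ∈ (i/n − δ, (i−k)/n); (c) |g_{i,n}(s)| ≤ C n^{−k} ( 1_{[(i−k)/n−δ, i/n−δ]}(s) + |g^{(k)}((i−k)/n − s)|·1_{(−∞,(i−k)/n−δ)}(s) ) for all s ≤ i/n − δ. -/

import Mathlib

open Set MeasureTheory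
open Finset Filter Topology

lemma iterDW_Ioi_eq (n : ℕ) (f : ℝ → ℝ) (a : ℝ) :
    ∀ x ∈ Set.Ioi a, iteratedDerivWithin n f (Set.Ioi a) x = iteratedDeriv n f x := fun x hx => by
  simp only [iteratedDerivWithin_eq_iteratedFDerivWithin, iteratedDeriv_eq_iteratedFDeriv,
    iteratedFDerivWithin_of_isOpen n isOpen_Ioi hx]

lemma sumA (f : ℝ → ℝ) (k : ℕ) (y h : ℝ) :
    ∑ j ∈ Finset.range (k+1), (-1:ℝ)^j * (k.choose j) * f (y + ((k:ℝ) - j) * h)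
      = (fwdDiff h)^[k] f y := by
  rw [fwdDiff_iter_eq_sum_shift, ← Finset.sum_range_reflect]
  refine Finset.sum_congr rfl fun j hj => ?_
  have hj' : j ≤ k := Nat.lt_succ_iff.mp (Finset.mem_range.mp hj)
  simp only [Nat.add_sub_cancel, Nat.sub_sub_self hj', Nat.choose_symm hj', zsmul_eq_mul,
    nsmul_eq_mul]
  rw [Nat.cast_sub hj']
  push_cast
  ring

lemma fdBound (a : ℝ) (k : ℕ) (f : ℝ → ℝ) (M x h : ℝ) (hh : 0 ≤ h) (hx : a < x)
    (hf : ContDiffOn ℝ k f (Set.Ioi a))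
    (hM : ∀ t ∈ Set.Icc x (x + k * h), |iteratedDeriv k f t| ≤ M) :
    |(fwdDiff h)^[k] f x| ≤ M * h ^ k := by
  induction k generalizing f M with
  | zero =>
    simpa using hM x (by simp)
  | succ k IH =>
    rw [Function.iterate_succ_apply]
    have hle : ((k : ℕ∞) : WithTop ℕ∞) ≤ ((k+1 : ℕ) : WithTop ℕ∞) := by
      exact_mod_cast Nat.le_succ k
    have hfk : ContDiffOn ℝ k f (Set.Ioi a) := hf.of_le hle
    have hshift : ContDiffOn ℝ k (fun y => f (y + h)) (Set.Ioi a) := by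
      refine hfk.comp ((contDiff_id.add contDiff_const).contDiffOn) fun y hy => ?_
      exact lt_of_lt_of_le hy (le_add_of_nonneg_right hh)
    have hF : ContDiffOn ℝ k (fwdDiff h f) (Set.Ioi a) := hshift.sub hfk
    have e1 : ∀ t ∈ Set.Ioi a,
        iteratedDeriv k (fwdDiff h f) t = iteratedDeriv k f (t + h) - iteratedDeriv k f t := by
      intro t ht
      have : fwdDiff h f = (fun y => f (y + h)) - f := rfl
      rw [← iterDW_Ioi_eq k _ a t ht, this,
        iteratedDerivWithin_sub ht (uniqueDiffOn_Ioi a) (hshift t ht) (hfk t ht),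
        iterDW_Ioi_eq k _ a t ht, iterDW_Ioi_eq k f a t ht,
        iteratedDeriv_comp_add_const]
    have hMF : ∀ t ∈ Set.Icc x (x + (k : ℝ) * h), |iteratedDeriv k (fwdDiff h f) t| ≤ M * h := by
      intro t ht
      have hta : a < t := lt_of_lt_of_le hx ht.1
      rw [e1 t hta]
      have hder : ∀ u ∈ Set.Icc t (t + h),
          HasDerivWithinAt (iteratedDeriv k f) (iteratedDeriv (k+1) f u) (Set.Icc t (t+h)) u := by
        intro u hu
        have hua : a < u := lt_of_lt_of_le hta hu.1
        have hdo : DifferentiableOn ℝ (iteratedDerivWithin k f (Set.Ioi a)) (Set.Ioi a) :=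
          hf.differentiableOn_iteratedDerivWithin (by exact_mod_cast Nat.lt_succ_self k)
            (uniqueDiffOn_Ioi a)
        have hdiffW : DifferentiableAt ℝ (iteratedDerivWithin k f (Set.Ioi a)) u :=
          (hdo u hua).differentiableAt (Ioi_mem_nhds hua)
        have hev : iteratedDerivWithin k f (Set.Ioi a) =ᶠ[𝓝 u] iteratedDeriv k f :=
          Filter.eventuallyEq_of_mem (Ioi_mem_nhds hua) (fun v hv => iterDW_Ioi_eq k f a v hv)
        have hdiff : DifferentiableAt ℝ (iteratedDeriv k f) u :=
          hdiffW.congr_of_eventuallyEq hev.symm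
        rw [iteratedDeriv_succ]
        exact hdiff.hasDerivAt.hasDerivWithinAt
      have hbnd : ∀ u ∈ Set.Ico t (t + h), ‖iteratedDeriv (k+1) f u‖ ≤ M := by
        intro u hu
        refine hM u ⟨le_trans ht.1 hu.1, ?_⟩
        have := ht.2
        push_cast
        push_cast at this
        nlinarith [hu.2.le]
      have := norm_image_sub_le_of_norm_deriv_le_segment' hder hbnd (t + h)
        ⟨le_add_of_nonneg_right hh, le_refl _⟩
      simpa using this
    have := IH (fwdDiff h f) (M * h) hF hMF
    calc |(fwdDiff h)^[k] (fwdDiff h f) x| ≤ M * h * h ^ k := this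
    _ = M * h ^ (k+1) := by ring

/-- Lemma 4.1: bounds on the kernel increments `g_{i,n}`. -/
theorem stmt_0
    (k : ℕ) (hk : 1 ≤ k) (α δ C₁ : ℝ)
    (hα : 0 < α) (hαk : α < k) (hδ : 0 < δ) (hC₁ : 0 < C₁)
    (g : ℝ → ℝ)
    (hg0 : ∀ t ≤ (0 : ℝ), g t = 0)
    (hgsmooth : ContDiffOn ℝ k g (Set.Ioi 0))
    (hgα : ∀ t ∈ Set.Ioo (0 : ℝ) δ, |g t| ≤ C₁ * t ^ α)
    (hgk : ∀ t ∈ Set.Ioo (0 : ℝ) δ, |iteratedDeriv k g t| ≤ C₁ * t ^ (α - k))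
    (hgkdec : ∀ s t : ℝ, δ < s → s ≤ t → |iteratedDeriv k g t| ≤ |iteratedDeriv k g s|) :
    ∃ C > (0 : ℝ), ∀ n i : ℕ, (2 * k / δ : ℝ) ≤ n → k ≤ i →
      (∀ s ∈ Set.Icc (((i : ℝ) - k) / n) ((i : ℝ) / n),
        |∑ j ∈ Finset.range (k + 1),
            (-1 : ℝ) ^ j * (k.choose j) * g (((i : ℝ) - j) / n - s)|
          ≤ C * ((i : ℝ) / n - s) ^ α) ∧
      (∀ s ∈ Set.Ioo ((i : ℝ) / n - δ) (((i : ℝ) - k) / n),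
        |∑ j ∈ Finset.range (k + 1),
            (-1 : ℝ) ^ j * (k.choose j) * g (((i : ℝ) - j) / n - s)|
          ≤ C * (n : ℝ) ^ (-(k : ℝ)) * (((i : ℝ) - k) / n - s) ^ (α - k)) ∧
      (∀ s : ℝ, s ≤ (i : ℝ) / n - δ →
        |∑ j ∈ Finset.range (k + 1),
            (-1 : ℝ) ^ j * (k.choose j) * g (((i : ℝ) - j) / n - s)|
          ≤ C * (n : ℝ) ^ (-(k : ℝ)) *
            ((if s ∈ Set.Icc (((i : ℝ) - k) / n - δ) ((i : ℝ) / n - δ) then (1 : ℝ) else 0) +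
              (if s < ((i : ℝ) - k) / n - δ
                then |iteratedDeriv k g (((i : ℝ) - k) / n - s)| else 0))) := by
  have hk1 : (1 : ℝ) ≤ k := by exact_mod_cast hk
  have hαk' : α - (k : ℝ) ≤ 0 := by linarith
  -- continuity of the k-th derivative on (0, ∞)
  have hcont : ContinuousOn (iteratedDeriv k g) (Set.Ioi 0) :=
    (hgsmooth.continuousOn_iteratedDerivWithin le_rfl (uniqueDiffOn_Ioi 0)).congr
      fun x hx => (iterDW_Ioi_eq k g 0 x hx).symm
  -- uniform bound on [δ/2, ∞)
  have hhalf : ∀ t ∈ Set.Ico (δ/2) δ, |iteratedDeriv k g t| ≤ C₁ * (δ/2) ^ (α - k) := by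
    intro t ht
    refine (hgk t ⟨lt_of_lt_of_le (half_pos hδ) ht.1, ht.2⟩).trans ?_
    exact mul_le_mul_of_nonneg_left
      (Real.rpow_le_rpow_of_nonpos (half_pos hδ) ht.1 hαk') hC₁.le
  have hca : ContinuousAt (iteratedDeriv k g) δ := hcont.continuousAt (Ioi_mem_nhds hδ)
  have hδbound : |iteratedDeriv k g δ| ≤ C₁ * (δ/2) ^ (α - k) := by
    have habs : Tendsto (fun u => |iteratedDeriv k g u|) (𝓝[<] δ) (𝓝 |iteratedDeriv k g δ|) :=
      (hca.abs.tendsto).mono_left nhdsWithin_le_nhds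
    refine le_of_tendsto habs ?_
    filter_upwards [Ioo_mem_nhdsLT (half_lt_self hδ)] with u hu
    exact hhalf u ⟨hu.1.le, hu.2⟩
  have hM0 : ∀ t, δ/2 ≤ t → |iteratedDeriv k g t| ≤ C₁ * (δ/2) ^ (α - k) := by
    intro t ht
    rcases lt_or_ge t δ with h1 | h2
    · exact hhalf t ⟨ht, h1⟩
    rcases eq_or_lt_of_le h2 with rfl | h3
    · exact hδbound
    · have habs' : Tendsto (fun u => |iteratedDeriv k g u|) (𝓝[>] δ)
          (𝓝 |iteratedDeriv k g δ|) := (hca.abs.tendsto).mono_left nhdsWithin_le_nhds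
      have hle : |iteratedDeriv k g t| ≤ |iteratedDeriv k g δ| := by
        refine ge_of_tendsto habs' ?_
        filter_upwards [Ioo_mem_nhdsGT h3]
          with u hu
        exact hgkdec u t hu.1 hu.2.le
      exact hle.trans hδbound
  have hM0pos : 0 < C₁ * (δ/2) ^ (α - k) := by
    have := Real.rpow_pos_of_pos (half_pos hδ) (α - k)
    positivity
  refine ⟨2^k * C₁ + C₁ + 1 + C₁ * (δ/2) ^ (α - k), by positivity, ?_⟩
  set C := 2^k * C₁ + C₁ + 1 + C₁ * (δ/2) ^ (α - k) with hC
  intro n i hn2 hki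
  have hn0 : (0:ℝ) < n := by
    refine lt_of_lt_of_le ?_ hn2
    have : (0:ℝ) < 2 * k := by linarith
    positivity
  have hkn : (k:ℝ)/n ≤ δ/2 := by
    rw [div_le_iff₀ hδ] at hn2
    rw [div_le_div_iff₀ hn0 (by norm_num : (0:ℝ) < 2)]
    linarith
  have hsum : ∀ s : ℝ, ∑ j ∈ Finset.range (k + 1),
      (-1:ℝ)^j * (k.choose j) * g (((i:ℝ) - j)/n - s)
      = (fwdDiff (1/(n:ℝ)))^[k] g (((i:ℝ)-k)/n - s) := by
    intro s
    rw [← sumA]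
    refine Finset.sum_congr rfl fun j hj => ?_
    have : ((i:ℝ) - j)/n - s = (((i:ℝ)-k)/n - s) + ((k:ℝ) - j) * (1/n) := by
      field_simp
      ring
    rw [this]
  have hnk : (n:ℝ) ^ (-(k:ℝ)) = (1/(n:ℝ))^k := by
    rw [Real.rpow_neg hn0.le, Real.rpow_natCast, one_div, inv_pow]
  have hik : (i:ℝ)/n - ((i:ℝ)-k)/n = (k:ℝ)/n := by
    field_simp
    ring
  refine ⟨?_, ?_, ?_⟩
  · -- part (a)
    intro s hs
    have hins : 0 ≤ (i:ℝ)/n - s := by linarith [hs.2]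
    have hrpow0 : 0 ≤ ((i:ℝ)/n - s) ^ α := Real.rpow_nonneg hins α
    have h2' : (i:ℝ)/n - s ≤ (k:ℝ)/n := by linarith [hs.1]
    have perterm : ∀ j ∈ Finset.range (k+1),
        |g (((i:ℝ) - j)/n - s)| ≤ C₁ * ((i:ℝ)/n - s) ^ α := by
      intro j hj
      set t := ((i:ℝ) - j)/n - s with htdef
      have htle : t ≤ (i:ℝ)/n - s := by
        have h1 : ((i:ℝ) - j)/n ≤ (i:ℝ)/n := by
          apply div_le_div_of_nonneg_right ?_ hn0.le
          · linarith [Nat.cast_nonneg (α := ℝ) j]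
        linarith
      rcases le_or_gt t 0 with h0 | h0
      · rw [hg0 t h0]
        simpa using mul_nonneg hC₁.le hrpow0
      · have htδ : t < δ :=
          lt_of_le_of_lt (le_trans htle (le_trans h2' hkn)) (half_lt_self hδ)
        exact (hgα t ⟨h0, htδ⟩).trans
          (mul_le_mul_of_nonneg_left (Real.rpow_le_rpow h0.le htle hα.le) hC₁.le)
    calc |∑ j ∈ Finset.range (k + 1), (-1:ℝ)^j * (k.choose j) * g (((i:ℝ) - j)/n - s)|
        ≤ ∑ j ∈ Finset.range (k + 1), |(-1:ℝ)^j * (k.choose j) * g (((i:ℝ) - j)/n - s)| :=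
          Finset.abs_sum_le_sum_abs _ _
      _ ≤ ∑ j ∈ Finset.range (k + 1), (k.choose j : ℝ) * (C₁ * ((i:ℝ)/n - s) ^ α) := by
          refine Finset.sum_le_sum fun j hj => ?_
          rw [abs_mul, abs_mul, abs_pow, abs_neg, abs_one, one_pow, one_mul, Nat.abs_cast]
          exact mul_le_mul_of_nonneg_left (perterm j hj) (Nat.cast_nonneg _)
      _ = 2^k * C₁ * ((i:ℝ)/n - s) ^ α := by
          rw [← Finset.sum_mul, ← Nat.cast_sum, Nat.sum_range_choose]
          push_cast
          ring
      _ ≤ C * ((i:ℝ)/n - s) ^ α := by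
          refine mul_le_mul_of_nonneg_right ?_ hrpow0
          rw [hC]; linarith
  · -- part (b)
    intro s hs
    rw [hsum s]
    set y := ((i:ℝ)-k)/n - s with hy
    have hy0 : 0 < y := sub_pos.mpr hs.2
    have hyrpow : 0 ≤ y ^ (α - k) := Real.rpow_nonneg hy0.le _
    have hey : y + (k:ℝ) * (1/n) = (i:ℝ)/n - s := by
      rw [hy]; field_simp; ring
    have hb := fdBound 0 k g (C₁ * y ^ (α - k)) y (1/(n:ℝ)) (by positivity) hy0 hgsmooth ?_
    · refine hb.trans ?_
      rw [hnk]
      have hCge : C₁ ≤ C := by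
        have h2k : (0:ℝ) < 2^k * C₁ := by positivity
        rw [hC]; linarith [hM0pos]
      have hpn : (0:ℝ) ≤ (1/(n:ℝ))^k := by positivity
      calc C₁ * y ^ (α - k) * (1/(n:ℝ))^k = C₁ * ((1/(n:ℝ))^k * y ^ (α - k)) := by ring
        _ ≤ C * ((1/(n:ℝ))^k * y ^ (α - k)) := by
            refine mul_le_mul_of_nonneg_right hCge (by positivity)
        _ = C * (1/(n:ℝ))^k * y ^ (α - k) := by ring
    · intro t ht
      have ht0 : 0 < t := lt_of_lt_of_le hy0 ht.1
      have htδ : t < δ := by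
        have := ht.2
        rw [hey] at this
        linarith [hs.1]
      refine (hgk t ⟨ht0, htδ⟩).trans ?_
      exact mul_le_mul_of_nonneg_left (Real.rpow_le_rpow_of_nonpos hy0 ht.1 hαk') hC₁.le
  · -- part (c)
    intro s hsc
    rw [hsum s]
    set y := ((i:ℝ)-k)/n - s with hy
    have hyge : δ - (k:ℝ)/n ≤ y := by rw [hy]; linarith [hik]
    have hy2 : δ/2 ≤ y := by linarith [hkn]
    have hy0 : 0 < y := lt_of_lt_of_le (half_pos hδ) hy2
    have hpn : (0:ℝ) ≤ (1/(n:ℝ))^k := by positivity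
    by_cases hcase : s < ((i:ℝ)-k)/n - δ
    · have hyδ : δ < y := by rw [hy]; linarith
      have hb := fdBound 0 k g (|iteratedDeriv k g y|) y (1/(n:ℝ)) (by positivity) hy0 hgsmooth
        (fun t ht => hgkdec y t hyδ ht.1)
      rw [if_neg (fun hmem : s ∈ Set.Icc (((i:ℝ)-k)/n - δ) ((i:ℝ)/n - δ) =>
        absurd hmem.1 (not_le.mpr hcase)), if_pos hcase, hnk, zero_add]
      refine hb.trans ?_
      have h1 : (1:ℝ) ≤ C := by
        have h2k : (0:ℝ) < 2^k * C₁ := by positivity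
        rw [hC]; linarith [hM0pos]
      calc |iteratedDeriv k g y| * (1/(n:ℝ))^k
          = 1 * ((1/(n:ℝ))^k * |iteratedDeriv k g y|) := by ring
        _ ≤ C * ((1/(n:ℝ))^k * |iteratedDeriv k g y|) := by
            refine mul_le_mul_of_nonneg_right h1 (by positivity)
        _ = C * (1/(n:ℝ))^k * |iteratedDeriv k g y| := by ring
    · have hmem : s ∈ Set.Icc (((i:ℝ)-k)/n - δ) ((i:ℝ)/n - δ) := ⟨not_lt.mp hcase, hsc⟩
      rw [if_pos hmem, if_neg hcase, hnk, add_zero, mul_one]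
      have hb := fdBound 0 k g (C₁ * (δ/2) ^ (α - k)) y (1/(n:ℝ)) (by positivity) hy0 hgsmooth
        (fun t ht => hM0 t (le_trans hy2 ht.1))
      refine hb.trans ?_
      have h1 : C₁ * (δ/2) ^ (α - k) ≤ C := by
        have h2k : (0:ℝ) < 2^k * C₁ := by positivity
        rw [hC]; linarith
      exact mul_le_mul_of_nonneg_right h1 hpn
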